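/- Partition reduction, backward direction: with the instance of the partition reduction (poles of weight M at (1,2) and (r+3,r+4), middle demands p_i=(i+1, i+r+3) of weight x_i for 2≤i≤r+1, total middle weight M), every routing R satisfies ω(H_R, w) ≥ 3M/2, with equality attainable only if the middle demands can be split into two groups of weight M/2 each; hence if some routing achieves ω(H_R,w) = 3M/2 then there exists T ⊆ S with Σ_{x∈T} x = M/2. -/

import Mathlib

open Finset

/-- A demand `(i,j)` with `1 ≤ i < j ≤ n` on the cycle with nodes `1,…,n`. -/
structure Demand (n : ℕ) where
  i : ℕ
  j : ℕ
  h1i : 1 ≤ i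
  hij : i < j
  hjn : j ≤ n

namespace Demand

variable {n : ℕ}

instance : DecidableEq (Demand n) := fun p q =>
  if h : p.i = q.i ∧ p.j = q.j then
    .isTrue (by cases p; cases q; simp_all)
  else
    .isFalse (by rintro rfl; simp_all)

/-- Arcs are labeled `1,…,n`; arc `k` joins node `k` to node `k+1` (arc `n` joins `n` to `1`).
The arcs of the route `p⁺ = [i,j]` (avoiding arc `n`). -/
def arcPlus (p : Demand n) : Set ℕ := {k | p.i ≤ k ∧ k < p.j}

/-- The arcs of the route `p⁻ = [j,i]` (through arc `n`). -/
def arcMinus (p : Demand n) : Set ℕ := {k | (1 ≤ k ∧ k < p.i) ∨ (p.j ≤ k ∧ k ≤ n)}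

/-- The vertex set of the route `p⁺ = [i,j]`. -/
def VPlus (p : Demand n) : Set ℕ := {v | p.i ≤ v ∧ v ≤ p.j}

/-- The vertex set of the route `p⁻ = [j,i]`. -/
def VMinus (p : Demand n) : Set ℕ := {v | (1 ≤ v ∧ v ≤ p.i) ∨ (p.j ≤ v ∧ v ≤ n)}

/-- The set of ends of a demand. -/
def ends (p : Demand n) : Set ℕ := {p.i, p.j}

/-- Demands `p` and `q` cross if `p` has exactly one end in each of the two routes of `q`. -/
def Cross (p q : Demand n) : Prop :=
  (p.ends ∩ q.VPlus).ncard = 1 ∧ (p.ends ∩ q.VMinus).ncard = 1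

/-- The arcs of the route chosen by `b` (`true` = `p⁺`, `false` = `p⁻`).
A routing of a set of demands is a function `r : Demand n → Bool`. -/
def arcs (p : Demand n) (b : Bool) : Set ℕ := if b then p.arcPlus else p.arcMinus

end Demand

open Demand

/-- Two parallel demands collide in the routing `r`: their chosen routes share an arc and
together cover all the arcs of the cycle. -/
def Collide {n : ℕ} (r : Demand n → Bool) (p q : Demand n) : Prop :=
  ¬ Cross p q ∧ (p.arcs (r p) ∩ q.arcs (r q)).Nonempty ∧
    p.arcs (r p) ∪ q.arcs (r q) = Set.Icc 1 n

open scoped Classical in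
/-- The maximum weight `ω(H_r, w)` of a clique of the intersection graph `H_r` of the
routing `r` of the demand set `D` (vertices: chosen routes; adjacency: sharing an arc). -/
noncomputable def cliqueNum {n : ℕ} (D : Finset (Demand n)) (r : Demand n → Bool)
    (w : Demand n → ℕ) : ℕ :=
  (D.powerset.filter fun C =>
      ∀ p ∈ C, ∀ q ∈ C, p ≠ q → ((p : Demand n).arcs (r p) ∩ q.arcs (r q)).Nonempty).sup
    fun C => ∑ p ∈ C, w p

/-- The first pole demand `p₁ = (1,2)` on the cycle of `2r+4` nodes. -/
def pole1 (r : ℕ) : Demand (2 * r + 4) := ⟨1, 2, by omega, by omega, by omega⟩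

/-- The second pole demand `p_{r+2} = (r+3, r+4)`. -/
def pole2 (r : ℕ) : Demand (2 * r + 4) := ⟨r + 3, r + 4, by omega, by omega, by omega⟩

/-- The middle demand `p_t = (t+1, t+r+3)` for `2 ≤ t ≤ r+1`. -/
def mid (r t : ℕ) (h2 : 2 ≤ t) (ht : t ≤ r + 1) : Demand (2 * r + 4) :=
  ⟨t + 1, t + r + 3, by omega, by omega, by omega⟩

/-- The demand set of the partition reduction. -/
def partD (r : ℕ) : Finset (Demand (2 * r + 4)) :=
  {pole1 r, pole2 r} ∪
    (Finset.Icc 2 (r + 1)).attach.image fun t =>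
      mid r t.1 (Finset.mem_Icc.mp t.2).1 (Finset.mem_Icc.mp t.2).2

/-- The weights of the partition reduction: the poles get weight `M`, and the middle
demand `p_t = (t+1, t+r+3)` gets weight `x t`. -/
def partW (r : ℕ) (x : ℕ → ℕ) (M : ℕ) : Demand (2 * r + 4) → ℕ := fun p =>
  if p.i = 1 ∨ p.i = r + 3 then M else x (p.i - 1)


section Aux

/-- Total version of `mid`. -/
def midD (r t : ℕ) : Demand (2 * r + 4) :=
  if h : 2 ≤ t ∧ t ≤ r + 1 then mid r t h.1 h.2 else pole1 r

lemma midD_eq (r t : ℕ) (h1 : 2 ≤ t) (h2 : t ≤ r + 1) : midD r t = mid r t h1 h2 := by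
  simp [midD, h1, h2]

lemma pole1_ne_pole2 (r : ℕ) : pole1 r ≠ pole2 r := by
  intro h
  have := congrArg Demand.i h
  simp [pole1, pole2] at this

lemma sum_partD (r : ℕ) (f : Demand (2 * r + 4) → ℕ) :
    ∑ p ∈ partD r, f p =
      f (pole1 r) + f (pole2 r) + ∑ t ∈ Finset.Icc 2 (r + 1), f (midD r t) := by
  classical
  have hdisj : Disjoint ({pole1 r, pole2 r} : Finset (Demand (2 * r + 4)))
      ((Finset.Icc 2 (r + 1)).attach.image fun t =>
        mid r t.1 (Finset.mem_Icc.mp t.2).1 (Finset.mem_Icc.mp t.2).2) := by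
    rw [Finset.disjoint_left]
    intro p hp hq
    obtain ⟨t, _, rfl⟩ := Finset.mem_image.mp hq
    have ht := Finset.mem_Icc.mp t.2
    rcases Finset.mem_insert.mp hp with h | h
    · have := congrArg Demand.i h
      simp [mid, pole1] at this
      omega
    · have := congrArg Demand.i (Finset.mem_singleton.mp h)
      simp [mid, pole2] at this
      omega
  have hinj : ∀ a ∈ (Finset.Icc 2 (r + 1)).attach, ∀ b ∈ (Finset.Icc 2 (r + 1)).attach,
      mid r a.1 (Finset.mem_Icc.mp a.2).1 (Finset.mem_Icc.mp a.2).2 =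
      mid r b.1 (Finset.mem_Icc.mp b.2).1 (Finset.mem_Icc.mp b.2).2 → a = b := by
    intro a _ b _ h
    have := congrArg Demand.i h
    simp only [mid] at this
    exact Subtype.ext (by omega)
  unfold partD
  rw [Finset.sum_union hdisj, Finset.sum_pair (pole1_ne_pole2 r), Finset.sum_image hinj]
  congr 1
  have : ∀ a ∈ (Finset.Icc 2 (r + 1)).attach,
      f (mid r a.1 (Finset.mem_Icc.mp a.2).1 (Finset.mem_Icc.mp a.2).2) = f (midD r a.1) := by
    intro a _
    rw [midD_eq r a.1 (Finset.mem_Icc.mp a.2).1 (Finset.mem_Icc.mp a.2).2]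
  rw [Finset.sum_congr rfl this]
  exact Finset.sum_attach (Finset.Icc 2 (r + 1)) (fun t => f (midD r t))

lemma mem1_pole1 (r : ℕ) (b : Bool) : 1 ∈ (pole1 r).arcs b ↔ b = true := by
  cases b <;> simp [Demand.arcs, Demand.arcPlus, Demand.arcMinus, pole1]

lemma mem2_pole1 (r : ℕ) (b : Bool) : r + 3 ∈ (pole1 r).arcs b ↔ b = false := by
  cases b <;> simp [Demand.arcs, Demand.arcPlus, Demand.arcMinus, pole1] <;> omega

lemma mem1_pole2 (r : ℕ) (b : Bool) : 1 ∈ (pole2 r).arcs b ↔ b = false := by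
  cases b <;> simp [Demand.arcs, Demand.arcPlus, Demand.arcMinus, pole2] <;> omega

lemma mem2_pole2 (r : ℕ) (b : Bool) : r + 3 ∈ (pole2 r).arcs b ↔ b = true := by
  cases b <;> simp [Demand.arcs, Demand.arcPlus, Demand.arcMinus, pole2] <;> omega

lemma mem1_mid (r t : ℕ) (h1 : 2 ≤ t) (h2 : t ≤ r + 1) (b : Bool) :
    1 ∈ (midD r t).arcs b ↔ b = false := by
  rw [midD_eq r t h1 h2]
  cases b <;> simp [Demand.arcs, Demand.arcPlus, Demand.arcMinus, mid] <;> omega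

lemma mem2_mid (r t : ℕ) (h1 : 2 ≤ t) (h2 : t ≤ r + 1) (b : Bool) :
    r + 3 ∈ (midD r t).arcs b ↔ b = true := by
  rw [midD_eq r t h1 h2]
  cases b <;> simp [Demand.arcs, Demand.arcPlus, Demand.arcMinus, mid] <;> omega

lemma w_pole1 (r : ℕ) (x : ℕ → ℕ) (M : ℕ) : partW r x M (pole1 r) = M := by
  simp [partW, pole1]

lemma w_pole2 (r : ℕ) (x : ℕ → ℕ) (M : ℕ) : partW r x M (pole2 r) = M := by
  simp [partW, pole2]

lemma w_mid (r t : ℕ) (x : ℕ → ℕ) (M : ℕ) (h1 : 2 ≤ t) (h2 : t ≤ r + 1) :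
    partW r x M (midD r t) = x t := by
  rw [midD_eq r t h1 h2]
  simp only [partW, mid]
  refine (if_neg (by omega : ¬ (t + 1 = 1 ∨ t + 1 = r + 3))).trans ?_
  norm_num

open scoped Classical in
lemma clique_le {n : ℕ} (D : Finset (Demand n)) (rt : Demand n → Bool)
    (w : Demand n → ℕ) (C : Finset (Demand n)) (hC : C ⊆ D)
    (h : ∀ p ∈ C, ∀ q ∈ C, p ≠ q → ((p : Demand n).arcs (rt p) ∩ q.arcs (rt q)).Nonempty) :
    ∑ p ∈ C, w p ≤ cliqueNum D rt w := by
  unfold cliqueNum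
  apply Finset.le_sup (f := fun C => ∑ p ∈ C, w p)
  simp only [Finset.mem_filter, Finset.mem_powerset]
  exact ⟨hC, h⟩

end Aux

/-- Partition reduction, backward direction: every routing of the
partition-reduction instance has maximum weighted clique at least `3M/2`, and if some
routing achieves exactly `3M/2`, then there is a subset `T` of the given integers summing
to `M/2`. -/
theorem partition_reduction_backward (r : ℕ) (x : ℕ → ℕ)
    (hx : ∀ t, 2 ≤ t → t ≤ r + 1 → 0 < x t)
    (M : ℕ) (hM : M = ∑ t ∈ Finset.Icc 2 (r + 1), x t) (hMe : Even M) :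
    (∀ rt : Demand (2 * r + 4) → Bool,
        3 * M / 2 ≤ cliqueNum (partD r) rt (partW r x M)) ∧
    (∀ rt : Demand (2 * r + 4) → Bool,
        cliqueNum (partD r) rt (partW r x M) = 3 * M / 2 →
        ∃ T ⊆ Finset.Icc 2 (r + 1), ∑ t ∈ T, x t = M / 2) := by
  classical
  have hM2 : M % 2 = 0 := Nat.even_iff.mp hMe
  have key : ∀ rt : Demand (2 * r + 4) → Bool,
      3 * M / 2 ≤ cliqueNum (partD r) rt (partW r x M) ∧
      (cliqueNum (partD r) rt (partW r x M) = 3 * M / 2 →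
        ∃ T ⊆ Finset.Icc 2 (r + 1), ∑ t ∈ T, x t = M / 2) := by
    intro rt
    set A := ∑ t ∈ (Finset.Icc 2 (r + 1)).filter (fun t => rt (midD r t) = false), x t with hA
    set B := ∑ t ∈ (Finset.Icc 2 (r + 1)).filter (fun t => ¬ rt (midD r t) = false), x t with hB
    have hAB : A + B = M := by
      rw [hA, hB, Finset.sum_filter_add_sum_filter_not, ← hM]
    -- the two arc-cliques
    have hS1 : ∑ p ∈ (partD r).filter (fun p => 1 ∈ p.arcs (rt p)), partW r x M p ≤ cliqueNum (partD r) rt (partW r x M) := by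
      apply clique_le _ _ _ _ (Finset.filter_subset _ _)
      intro p hp q hq _
      exact ⟨1, (Finset.mem_filter.mp hp).2, (Finset.mem_filter.mp hq).2⟩
    have hS2 : ∑ p ∈ (partD r).filter (fun p => r + 3 ∈ p.arcs (rt p)), partW r x M p ≤ cliqueNum (partD r) rt (partW r x M) := by
      apply clique_le _ _ _ _ (Finset.filter_subset _ _)
      intro p hp q hq _
      exact ⟨r + 3, (Finset.mem_filter.mp hp).2, (Finset.mem_filter.mp hq).2⟩
    have e1 : ∑ p ∈ (partD r).filter (fun p => 1 ∈ p.arcs (rt p)), partW r x M p =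
        (if rt (pole1 r) = true then M else 0) +
        (if rt (pole2 r) = false then M else 0) + A := by
      rw [Finset.sum_filter, sum_partD]
      have hp1 : (if 1 ∈ (pole1 r).arcs (rt (pole1 r)) then partW r x M (pole1 r) else 0) =
          (if rt (pole1 r) = true then M else 0) := by
        rw [w_pole1]
        by_cases h : rt (pole1 r) = true <;> simp [h, mem1_pole1]
      have hp2 : (if 1 ∈ (pole2 r).arcs (rt (pole2 r)) then partW r x M (pole2 r) else 0) =
          (if rt (pole2 r) = false then M else 0) := by
        rw [w_pole2]
        by_cases h : rt (pole2 r) = false <;> simp [h, mem1_pole2]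
      have hmidsum : ∑ t ∈ Finset.Icc 2 (r + 1),
          (if 1 ∈ (midD r t).arcs (rt (midD r t)) then partW r x M (midD r t) else 0) = A := by
        rw [hA, Finset.sum_filter]
        apply Finset.sum_congr rfl
        intro t ht
        obtain ⟨h1, h2⟩ := Finset.mem_Icc.mp ht
        rw [w_mid r t x M h1 h2]
        by_cases h : rt (midD r t) = false <;> simp [h, mem1_mid r t h1 h2]
      rw [hp1, hp2, hmidsum]
    have e2 : ∑ p ∈ (partD r).filter (fun p => r + 3 ∈ p.arcs (rt p)), partW r x M p =
        (if rt (pole1 r) = true then 0 else M) +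
        (if rt (pole2 r) = false then 0 else M) + B := by
      rw [Finset.sum_filter, sum_partD]
      have hp1 : (if r + 3 ∈ (pole1 r).arcs (rt (pole1 r)) then partW r x M (pole1 r) else 0) =
          (if rt (pole1 r) = true then 0 else M) := by
        rw [w_pole1]
        by_cases h : rt (pole1 r) = true <;> simp [h, mem2_pole1]
      have hp2 : (if r + 3 ∈ (pole2 r).arcs (rt (pole2 r)) then partW r x M (pole2 r) else 0) =
          (if rt (pole2 r) = false then 0 else M) := by
        rw [w_pole2]
        by_cases h : rt (pole2 r) = false <;> simp [h, mem2_pole2]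
      have hmidsum : ∑ t ∈ Finset.Icc 2 (r + 1),
          (if r + 3 ∈ (midD r t).arcs (rt (midD r t)) then partW r x M (midD r t) else 0) = B := by
        rw [hB, Finset.sum_filter]
        apply Finset.sum_congr rfl
        intro t ht
        obtain ⟨h1, h2⟩ := Finset.mem_Icc.mp ht
        rw [w_mid r t x M h1 h2]
        by_cases h : rt (midD r t) = false <;> simp [h, mem2_mid r t h1 h2]
      rw [hp1, hp2, hmidsum]
    rw [e1] at hS1
    rw [e2] at hS2
    constructor
    · by_cases h1 : rt (pole1 r) = true <;> by_cases h2 : rt (pole2 r) = false <;>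
        simp [h1, h2] at hS1 hS2 <;> omega
    · intro hKeq
      have hAorB : A = M / 2 ∨ B = M / 2 := by
        by_cases h1 : rt (pole1 r) = true <;> by_cases h2 : rt (pole2 r) = false <;>
          simp [h1, h2] at hS1 hS2 <;> omega
      rcases hAorB with h | h
      · exact ⟨_, Finset.filter_subset _ _, h⟩
      · exact ⟨_, Finset.filter_subset _ _, h⟩
  exact ⟨fun rt => (key rt).1, fun rt h => (key rt).2 h⟩
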